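/- Let n ≥ 3 be odd and write V_i = {v_{i,1},…,v_{i,r_i}} for each block. Then the following d vectors in ℤ^{d+n} are linearly independent over ℚ: the vectors w_e for the edges e = {v_{i,j}, v_{i+1,j}} with 1 ≤ i ≤ n−1 and 1 ≤ j ≤ r_1, the edges e = {v_{n,j}, v_{1,j}} with 1 ≤ j ≤ r_1, and the edges e = {v_{1,1}, v_{i,j}} with 2 ≤ i ≤ n and r_1 + 1 ≤ j ≤ r_i. -/

import Mathlib

/-- The rational vector `w_e ∈ ℚ^d ⊕ ℚ^n` associated to the edge `e = {a,b}`. -/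
def wvecQ (n d : ℕ) (blk : Fin d → ℕ) (a b : Fin d) : (Fin d → ℚ) × (Fin n → ℚ) :=
  (fun k => (if k = a then 1 else 0) + (if k = b then 1 else 0),
   fun i => if (i : ℕ) = blk a ∨ (i : ℕ) = blk b then 0 else 1)

/-- For odd `n ≥ 3`, the `d` vectors `w_e` for the edges
`{v_{i,j}, v_{i+1 mod n, j}}` (`0 ≤ i < n`, `0 ≤ j < r 0`, i.e. the cycles `C_j`), together
with the edges `{v_{0,0}, v_{i,j}}` (`1 ≤ i < n`, `r 0 ≤ j < r i`), are linearly
independent over `ℚ`. (Here indices are 0-based: `v i j` is the `(j+1)`-st vertex of the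
`(i+1)`-st block.) -/
theorem stmt_1 (n : ℕ) (hn3 : 3 ≤ n) (hodd : Odd n) (r : ℕ → ℕ)
    (hr1 : ∀ i < n, 1 ≤ r i)
    (hmono : ∀ i j, i ≤ j → j < n → r i ≤ r j)
    (d : ℕ) (hd : d = ∑ i ∈ Finset.range n, r i)
    (blk : Fin d → ℕ) (hblkn : ∀ a, blk a < n)
    (hcard : ∀ i < n, (Finset.univ.filter (fun a : Fin d => blk a = i)).card = r i)
    (v : ℕ → ℕ → Fin d)
    (hvblk : ∀ i < n, ∀ j < r i, blk (v i j) = i)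
    (hvinj : ∀ i < n, ∀ i' < n, ∀ j < r i, ∀ j' < r i',
      v i j = v i' j' → i = i' ∧ j = j') :
    LinearIndependent ℚ
      (Sum.elim
        (fun p : Fin n × Fin (r 0) =>
          wvecQ n d blk (v (p.1 : ℕ) (p.2 : ℕ)) (v (((p.1 : ℕ) + 1) % n) (p.2 : ℕ)))
        (fun q : {p : ℕ × ℕ // 1 ≤ p.1 ∧ p.1 < n ∧ r 0 ≤ p.2 ∧ p.2 < r p.1} =>
          wvecQ n d blk (v 0 0) (v q.1.1 q.1.2))) := by
  classical
  have hnpos : 0 < n := by omega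
  have hr0le : ∀ i < n, r 0 ≤ r i := fun i hi => hmono 0 i (Nat.zero_le _) hi
  have hmodeq : ∀ a b : ℕ, (a + 1) % n = (b + 1) % n → a % n = b % n := by
    intro a b h
    exact Nat.ModEq.add_right_cancel' 1 h
  have hne10 : (1 : ℕ) % n ≠ 0 % n := by
    rw [Nat.mod_eq_of_lt (by omega), Nat.zero_mod]; omega
  have hsuccne : ∀ a : ℕ, (a + 1) % n ≠ a % n := by
    intro a h
    have h' : a + 1 ≡ a + 0 [MOD n] := by rw [add_zero]; exact h
    exact hne10 (Nat.ModEq.add_left_cancel' a h')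
  haveI : Fintype {p : ℕ × ℕ // 1 ≤ p.1 ∧ p.1 < n ∧ r 0 ≤ p.2 ∧ p.2 < r p.1} := by
    apply Fintype.ofInjective (fun q => v q.1.1 q.1.2)
    rintro ⟨⟨i, j⟩, h1, h2, h3, h4⟩ ⟨⟨i', j'⟩, h1', h2', h3', h4'⟩ h
    obtain ⟨e1, e2⟩ := hvinj i h2 i' h2' j h4 j' h4' h
    subst e1; subst e2; rfl
  rw [Fintype.linearIndependent_iff]
  intro g hg
  have hco : ∀ k : Fin d,
      (∑ p : Fin n × Fin (r 0), g (Sum.inl p) *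
        ((if k = v (p.1 : ℕ) (p.2 : ℕ) then (1:ℚ) else 0) +
         (if k = v (((p.1 : ℕ) + 1) % n) (p.2 : ℕ) then 1 else 0))) +
      (∑ q : {p : ℕ × ℕ // 1 ≤ p.1 ∧ p.1 < n ∧ r 0 ≤ p.2 ∧ p.2 < r p.1},
        g (Sum.inr q) *
        ((if k = v 0 0 then (1:ℚ) else 0) + (if k = v q.1.1 q.1.2 then 1 else 0))) = 0 := by
    intro k
    have h1 := congrFun (congrArg Prod.fst hg) k
    simpa [Prod.fst_add, Prod.fst_sum, Prod.smul_fst, Finset.sum_apply, Pi.smul_apply,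
      smul_eq_mul, Fintype.sum_sum_type, Sum.elim_inl, Sum.elim_inr, wvecQ,
      Prod.fst_zero, Pi.zero_apply] using h1
  -- Step A: star coefficients vanish
  have hstar : ∀ q : {p : ℕ × ℕ // 1 ≤ p.1 ∧ p.1 < n ∧ r 0 ≤ p.2 ∧ p.2 < r p.1},
      g (Sum.inr q) = 0 := by
    rintro ⟨⟨i, j⟩, h1, h2, h3, h4⟩
    have hk := hco (v i j)
    rw [Finset.sum_eq_zero (fun p _ => by
        have e1 : v i j ≠ v (p.1 : ℕ) (p.2 : ℕ) := by
          intro h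
          obtain ⟨_, e⟩ := hvinj i h2 p.1 p.1.isLt j h4 p.2
            (lt_of_lt_of_le p.2.isLt (hr0le p.1 p.1.isLt)) h
          have := p.2.isLt; omega
        have e2 : v i j ≠ v (((p.1 : ℕ) + 1) % n) (p.2 : ℕ) := by
          intro h
          obtain ⟨_, e⟩ := hvinj i h2 _ (Nat.mod_lt _ hnpos) j h4 p.2
            (lt_of_lt_of_le p.2.isLt (hr0le _ (Nat.mod_lt _ hnpos))) h
          have := p.2.isLt; omega
        simp [e1, e2]), zero_add] at hk
    have e0 : v i j ≠ v 0 0 := by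
      intro h
      obtain ⟨e, _⟩ := hvinj i h2 0 hnpos j h4 0 (hr1 0 hnpos) h
      omega
    rw [Finset.sum_congr rfl (fun q' _ => show _ =
        (if q' = (⟨(i, j), h1, h2, h3, h4⟩ :
          {p : ℕ × ℕ // 1 ≤ p.1 ∧ p.1 < n ∧ r 0 ≤ p.2 ∧ p.2 < r p.1})
         then g (Sum.inr q') else 0) from by
        obtain ⟨⟨i', j'⟩, h1', h2', h3', h4'⟩ := q'
        by_cases hv : v i j = v i' j'
        · obtain ⟨e1, e2⟩ := hvinj i h2 i' h2' j h4 j' h4' hv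
          subst e1; subst e2
          simp [e0, hv.symm]
        · have hne : (⟨(i', j'), h1', h2', h3', h4'⟩ :
              {p : ℕ × ℕ // 1 ≤ p.1 ∧ p.1 < n ∧ r 0 ≤ p.2 ∧ p.2 < r p.1}) ≠
              ⟨(i, j), h1, h2, h3, h4⟩ := by
            intro h
            apply hv
            have hval : (i', j') = (i, j) := congrArg Subtype.val h
            rw [Prod.mk.injEq] at hval
            rw [hval.1, hval.2]
          simp [e0, hv, hne]),
      Finset.sum_ite_eq'] at hk
    simpa [e0] using hk
  -- Step B: cycle relation
  have hcyc : ∀ (m : ℕ) (j : Fin (r 0)),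
      g (Sum.inl (⟨(m + 1) % n, Nat.mod_lt _ hnpos⟩, j)) +
      g (Sum.inl (⟨m % n, Nat.mod_lt _ hnpos⟩, j)) = 0 := by
    intro m j
    have hk := hco (v ((m + 1) % n) (j : ℕ))
    have hrz : ∑ q : {p : ℕ × ℕ // 1 ≤ p.1 ∧ p.1 < n ∧ r 0 ≤ p.2 ∧ p.2 < r p.1},
        g (Sum.inr q) * ((if v ((m + 1) % n) (j : ℕ) = v 0 0 then (1:ℚ) else 0) +
          (if v ((m + 1) % n) (j : ℕ) = v q.1.1 q.1.2 then 1 else 0)) = 0 :=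
      Finset.sum_eq_zero (fun q _ => by rw [hstar q, zero_mul])
    rw [hrz, add_zero] at hk
    have hjlt : ∀ b : ℕ, b < n → (j : ℕ) < r b :=
      fun b hb => lt_of_lt_of_le j.isLt (hr0le b hb)
    have hAB : ((⟨(m + 1) % n, Nat.mod_lt _ hnpos⟩ : Fin n), j) ≠
        ((⟨m % n, Nat.mod_lt _ hnpos⟩ : Fin n), j) := by
      intro h
      have : (m + 1) % n = m % n := congrArg (fun p => ((p.1 : Fin n) : ℕ)) h
      exact hsuccne m this
    rw [Finset.sum_congr rfl (fun p _ => show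
        g (Sum.inl p) * ((if v ((m + 1) % n) (j : ℕ) = v (p.1 : ℕ) (p.2 : ℕ) then (1:ℚ) else 0) +
          (if v ((m + 1) % n) (j : ℕ) = v (((p.1 : ℕ) + 1) % n) (p.2 : ℕ) then 1 else 0)) =
        (if p = ((⟨(m + 1) % n, Nat.mod_lt _ hnpos⟩ : Fin n), j) then g (Sum.inl p) else 0) +
        (if p = ((⟨m % n, Nat.mod_lt _ hnpos⟩ : Fin n), j) then g (Sum.inl p) else 0) from by
      by_cases hp1 : p = ((⟨(m + 1) % n, Nat.mod_lt _ hnpos⟩ : Fin n), j)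
      · subst hp1
        have e2 : v ((m + 1) % n) (j : ℕ) ≠ v ((m + 1 + 1) % n) (j : ℕ) := by
          intro h
          obtain ⟨e, _⟩ := hvinj _ (Nat.mod_lt _ hnpos) _ (Nat.mod_lt _ hnpos)
            j (hjlt _ (Nat.mod_lt _ hnpos)) j (hjlt _ (Nat.mod_lt _ hnpos)) h
          exact hsuccne (m + 1) e.symm
        simp [e2, hAB]
      · by_cases hp2 : p = ((⟨m % n, Nat.mod_lt _ hnpos⟩ : Fin n), j)
        · subst hp2
          have e1 : v ((m + 1) % n) (j : ℕ) ≠ v (m % n) (j : ℕ) := by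
            intro h
            obtain ⟨e, _⟩ := hvinj _ (Nat.mod_lt _ hnpos) _ (Nat.mod_lt _ hnpos)
              j (hjlt _ (Nat.mod_lt _ hnpos)) j (hjlt _ (Nat.mod_lt _ hnpos)) h
            exact hsuccne m e
          simp [e1, hp1, Nat.mod_add_mod]
        · have e1 : v ((m + 1) % n) (j : ℕ) ≠ v (p.1 : ℕ) (p.2 : ℕ) := by
            intro h
            obtain ⟨e, e'⟩ := hvinj _ (Nat.mod_lt _ hnpos) p.1 p.1.isLt
              j (hjlt _ (Nat.mod_lt _ hnpos)) p.2
              (lt_of_lt_of_le p.2.isLt (hr0le p.1 p.1.isLt)) h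
            exact hp1 (Prod.ext_iff.mpr ⟨Fin.ext e.symm, Fin.ext e'.symm⟩)
          have e2 : v ((m + 1) % n) (j : ℕ) ≠ v (((p.1 : ℕ) + 1) % n) (p.2 : ℕ) := by
            intro h
            obtain ⟨e, e'⟩ := hvinj _ (Nat.mod_lt _ hnpos) _ (Nat.mod_lt _ hnpos)
              j (hjlt _ (Nat.mod_lt _ hnpos)) p.2
              (lt_of_lt_of_le p.2.isLt (hr0le _ (Nat.mod_lt _ hnpos))) h
            have e'' : m % n = (p.1 : ℕ) % n := hmodeq m p.1 e
            rw [Nat.mod_eq_of_lt p.1.isLt] at e''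
            exact hp2 (Prod.ext_iff.mpr ⟨Fin.ext e''.symm, Fin.ext e'.symm⟩)
          simp [e1, e2, hp1, hp2]),
      Finset.sum_add_distrib, Finset.sum_ite_eq', Finset.sum_ite_eq'] at hk
    simpa using hk
  -- Step C: the cycle coefficients vanish
  have hzero : ∀ (j : Fin (r 0)) (m : ℕ),
      g (Sum.inl (⟨m % n, Nat.mod_lt _ hnpos⟩, j)) = 0 := by
    intro j
    have hstep : ∀ m : ℕ, g (Sum.inl (⟨(m + 1) % n, Nat.mod_lt _ hnpos⟩, j)) =
        - g (Sum.inl (⟨m % n, Nat.mod_lt _ hnpos⟩, j)) := fun m => by linarith [hcyc m j]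
    have hpow : ∀ m : ℕ, g (Sum.inl (⟨m % n, Nat.mod_lt _ hnpos⟩, j)) =
        (-1) ^ m * g (Sum.inl (⟨0 % n, Nat.mod_lt _ hnpos⟩, j)) := by
      intro m
      induction m with
      | zero => simp
      | succ m ih => rw [hstep m, ih, pow_succ]; ring
    have h0 : g (Sum.inl (⟨0 % n, Nat.mod_lt _ hnpos⟩, j)) = 0 := by
      have hn := hpow n
      rw [Odd.neg_one_pow hodd] at hn
      have hfin : (⟨n % n, Nat.mod_lt _ hnpos⟩ : Fin n) = ⟨0 % n, Nat.mod_lt _ hnpos⟩ :=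
        Fin.ext (by simp)
      rw [hfin] at hn
      linarith
    intro m
    rw [hpow m, h0, mul_zero]
  rintro (⟨i, j⟩ | q)
  · have h := hzero j (i : ℕ)
    have hfin : (⟨(i : ℕ) % n, Nat.mod_lt _ hnpos⟩ : Fin n) = i :=
      Fin.ext (Nat.mod_eq_of_lt i.isLt)
    rwa [hfin] at h
  · exact hstar q
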